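/- Assume condition (5) (E|ε_1|^α < ∞ for some α ≥ 2), condition (6) (Σ_{k=i}^∞ c_k² = O(i^{−2/ρ}(log i)^{−3}) for some ρ ∈ (0,1/2)) and condition (7) (sup_{x∈ℝ}(f_ε(x) + |f_ε′(x)| + |f_ε″(x)|) < ∞). Then there exists a finite constant C such that for all n ≥ 1 and all −∞ < x < y < ∞, E[ sup_{x ≤ u ≤ y} |f̂_n*(u) − f_n*(u)|² ] ≤ C/n. -/

import Mathlib

open MeasureTheory ProbabilityTheory Filter Set

noncomputable section

namespace BKpaper

variable {Ω : Type*} [MeasureSpace Ω]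

/-- The linear process `X_i = ∑_{k≥0} c_k ε_{i−k}`. -/
def Xproc (c : ℕ → ℝ) (ε : ℤ → Ω → ℝ) (i : ℤ) (ω : Ω) : ℝ :=
  ∑' k : ℕ, c k * ε (i - k) ω

/-- `X_{i,i−1} = ∑_{k≥1} c_k ε_{i−k}`. -/
def Xlag (c : ℕ → ℝ) (ε : ℤ → Ω → ℝ) (i : ℤ) (ω : Ω) : ℝ :=
  ∑' k : ℕ, if 1 ≤ k then c k * ε (i - k) ω else 0

/-- Distribution function of a random variable. -/
def cdf (X : Ω → ℝ) (x : ℝ) : ℝ := ((ℙ : Measure Ω) {ω | X ω ≤ x}).toReal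

/-- Empirical distribution function based on `X_1, …, X_n`. -/
def empCdf (X : ℤ → Ω → ℝ) (n : ℕ) (x : ℝ) (ω : Ω) : ℝ :=
  (n : ℝ)⁻¹ * ∑ i ∈ Finset.Icc 1 n, (if X (i : ℤ) ω ≤ x then (1:ℝ) else 0)

/-- (Left-continuous generalized inverse) quantile function. -/
def quant (G : ℝ → ℝ) (y : ℝ) : ℝ := sInf {x | y ≤ G x}

/-- The empirical quantile function `Q_n`. -/
def empQuant (X : ℤ → Ω → ℝ) (n : ℕ) (y : ℝ) (ω : Ω) : ℝ :=
  quant (fun x => empCdf X n x ω) y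

/-- The general quantile process `q_n(y) = √n (Q(y) − Q_n(y))`. -/
def qn (X : ℤ → Ω → ℝ) (F : ℝ → ℝ) (n : ℕ) (y : ℝ) (ω : Ω) : ℝ :=
  Real.sqrt n * (quant F y - empQuant X n y ω)

/-- The general empirical process `β_n(x) = √n (F_n(x) − F(x))`. -/
def betan (X : ℤ → Ω → ℝ) (F : ℝ → ℝ) (n : ℕ) (x : ℝ) (ω : Ω) : ℝ :=
  Real.sqrt n * (empCdf X n x ω - F x)

/-- The uniform empirical distribution `E_n` of `U_i = F(X_i)`. -/
def En (X : ℤ → Ω → ℝ) (F : ℝ → ℝ) (n : ℕ) (x : ℝ) (ω : Ω) : ℝ :=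
  empCdf (fun i ω => F (X i ω)) n x ω

/-- The uniform empirical process `α_n(x) = √n (E_n(x) − x)`. -/
def alphan (X : ℤ → Ω → ℝ) (F : ℝ → ℝ) (n : ℕ) (x : ℝ) (ω : Ω) : ℝ :=
  Real.sqrt n * (En X F n x ω - x)

/-- The uniform empirical quantile function `U_n`. -/
def uniQuant (X : ℤ → Ω → ℝ) (F : ℝ → ℝ) (n : ℕ) (y : ℝ) (ω : Ω) : ℝ :=
  quant (fun x => En X F n x ω) y

/-- The uniform quantile process `u_n(y) = √n (y − U_n(y))`. -/
def un (X : ℤ → Ω → ℝ) (F : ℝ → ℝ) (n : ℕ) (y : ℝ) (ω : Ω) : ℝ :=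
  Real.sqrt n * (y - uniQuant X F n y ω)

/-- `Y_i(x) = F_ε(x − X_{i,i−1}) − F(x)`. -/
def Yproc (c : ℕ → ℝ) (ε : ℤ → Ω → ℝ) (F : ℝ → ℝ) (i : ℤ) (x : ℝ) (ω : Ω) : ℝ :=
  cdf (ε 0) (x - Xlag c ε i ω) - F x

/-- `N_n(x) = n⁻¹ ∑_{i=1}^n Y_i(x)`. -/
def Nn (c : ℕ → ℝ) (ε : ℤ → Ω → ℝ) (F : ℝ → ℝ) (n : ℕ) (x : ℝ) (ω : Ω) : ℝ :=
  (n : ℝ)⁻¹ * ∑ i ∈ Finset.Icc 1 n, Yproc c ε F (i : ℤ) x ω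

/-- Truncation point `⌈i^ρ⌉`. -/
def trunc (ρ : ℝ) (i : ℕ) : ℕ := ⌈(i : ℝ) ^ ρ⌉₊

/-- Truncated `X̂_i = ∑_{k=0}^{⌈i^ρ⌉−1} c_k ε_{i−k}`. -/
def XprocHat (c : ℕ → ℝ) (ε : ℤ → Ω → ℝ) (ρ : ℝ) (i : ℕ) (ω : Ω) : ℝ :=
  ∑ k ∈ Finset.range (trunc ρ i), c k * ε ((i : ℤ) - k) ω

/-- Truncated `X̂_{i,i−1} = ∑_{k=1}^{⌈i^ρ⌉−1} c_k ε_{i−k}`. -/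
def XlagHat (c : ℕ → ℝ) (ε : ℤ → Ω → ℝ) (ρ : ℝ) (i : ℕ) (ω : Ω) : ℝ :=
  ∑ k ∈ Finset.Ico 1 (trunc ρ i), c k * ε ((i : ℤ) - k) ω

/-- `F̂_i(x) = E F_ε(x − X̂_{i,i−1})`. -/
def FHat (c : ℕ → ℝ) (ε : ℤ → Ω → ℝ) (ρ : ℝ) (i : ℕ) (x : ℝ) : ℝ :=
  ∫ ω, cdf (ε 0) (x - XlagHat c ε ρ i ω) ∂(ℙ : Measure Ω)

/-- `Ŷ_i(x) = F_ε(x − X̂_{i,i−1}) − F̂_i(x)`. -/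
def YHat (c : ℕ → ℝ) (ε : ℤ → Ω → ℝ) (ρ : ℝ) (i : ℕ) (x : ℝ) (ω : Ω) : ℝ :=
  cdf (ε 0) (x - XlagHat c ε ρ i ω) - FHat c ε ρ i x

/-- `N̂_n(x) = n⁻¹ ∑_{i=1}^n Ŷ_i(x)`. -/
def NHat (c : ℕ → ℝ) (ε : ℤ → Ω → ℝ) (ρ : ℝ) (n : ℕ) (x : ℝ) (ω : Ω) : ℝ :=
  (n : ℝ)⁻¹ * ∑ i ∈ Finset.Icc 1 n, YHat c ε ρ i x ω

/-- The conditional empirical density `f_n*(u) = n⁻¹ ∑_{i=1}^n f_ε(u − X_{i,i−1})`. -/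
def fnStar (c : ℕ → ℝ) (ε : ℤ → Ω → ℝ) (fε : ℝ → ℝ) (n : ℕ) (u : ℝ) (ω : Ω) : ℝ :=
  (n : ℝ)⁻¹ * ∑ i ∈ Finset.Icc 1 n, fε (u - Xlag c ε (i : ℤ) ω)

/-- Its truncated version `f̂_n*(u) = n⁻¹ ∑_{i=1}^n f_ε(u − X̂_{i,i−1})`. -/
def fnStarHat (c : ℕ → ℝ) (ε : ℤ → Ω → ℝ) (fε : ℝ → ℝ) (ρ : ℝ) (n : ℕ) (u : ℝ) (ω : Ω) : ℝ :=
  (n : ℝ)⁻¹ * ∑ i ∈ Finset.Icc 1 n, fε (u - XlagHat c ε ρ i ω)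

/-- `Γ(x,y) = E Y_0(x)Y_0(y) + ∑_{i≥1} (E Y_0(x)Y_i(y) + E Y_0(y)Y_i(x))`. -/
def Gamma (c : ℕ → ℝ) (ε : ℤ → Ω → ℝ) (F : ℝ → ℝ) (x y : ℝ) : ℝ :=
  (∫ ω, Yproc c ε F 0 x ω * Yproc c ε F 0 y ω ∂(ℙ : Measure Ω)) +
    ∑' i : ℕ,
      ((∫ ω, Yproc c ε F 0 x ω * Yproc c ε F (i + 1 : ℕ) y ω ∂(ℙ : Measure Ω)) +
        (∫ ω, Yproc c ε F 0 y ω * Yproc c ε F (i + 1 : ℕ) x ω ∂(ℙ : Measure Ω)))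

/-- `Ñ_n(y) = n⁻¹ ∑_{i=1}^n (F_ε(Q(y) − X_{i,i−1}) − y)`. -/
def Ntilde (c : ℕ → ℝ) (ε : ℤ → Ω → ℝ) (F : ℝ → ℝ) (n : ℕ) (y : ℝ) (ω : Ω) : ℝ :=
  (n : ℝ)⁻¹ * ∑ i ∈ Finset.Icc 1 n, (cdf (ε 0) (quant F y - Xlag c ε (i : ℤ) ω) - y)

/-- `Ñ_n′(y) = n⁻¹ ∑_{i=1}^n (Q′(y) f_ε(Q(y) − X_{i,i−1}) − 1)`. -/
def NtildeDeriv (c : ℕ → ℝ) (ε : ℤ → Ω → ℝ) (F : ℝ → ℝ) (fε Q' : ℝ → ℝ) (n : ℕ)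
    (y : ℝ) (ω : Ω) : ℝ :=
  (n : ℝ)⁻¹ * ∑ i ∈ Finset.Icc 1 n, (Q' y * fε (quant F y - Xlag c ε (i : ℤ) ω) - 1)

/-- The `L^α` norm `‖Z‖_α = (E|Z|^α)^{1/α}`. -/
def Lnorm (α : ℝ) (Z : Ω → ℝ) : ℝ := (∫ ω, |Z ω| ^ α ∂(ℙ : Measure Ω)) ^ (1 / α)

/-- Tail sum `∑_{k ≥ t} c_k²`. -/
def tailSq (c : ℕ → ℝ) (t : ℝ) : ℝ := ∑' k : ℕ, if t ≤ (k : ℝ) then (c k) ^ 2 else 0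

/-- Tail sum `∑_{k ≥ t} |c_k|^α`. -/
def tailPow (c : ℕ → ℝ) (α t : ℝ) : ℝ := ∑' k : ℕ, if t ≤ (k : ℝ) then |c k| ^ α else 0

/-- `Z_n = O_{a.s.}(r_n)`. -/
def Oas (Z : ℕ → Ω → ℝ) (r : ℕ → ℝ) : Prop :=
  ∃ C : ℝ, ∀ᵐ ω ∂(ℙ : Measure Ω),
    Filter.limsup (fun n => |Z n ω| / r n) Filter.atTop ≤ C

/-- `Z_n = o_{a.s.}(r_n)`. -/
def oas (Z : ℕ → Ω → ℝ) (r : ℕ → ℝ) : Prop :=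
  ∀ᵐ ω ∂(ℙ : Measure Ω),
    Filter.Tendsto (fun n => |Z n ω| / r n) Filter.atTop (nhds 0)

/-- The Bahadur–Kiefer rate `b_n = n^{−1/4}(log n)^{1/2}(log log n)^{1/4}`. -/
def bnRate (n : ℕ) : ℝ :=
  (n : ℝ) ^ (-(1/4 : ℝ)) * Real.log n ^ (1/2 : ℝ) * Real.log (Real.log n) ^ (1/4 : ℝ)

/-- `λ_n = n^{−1/2}(2 log log n)^{1/2}`. -/
def lamRate (n : ℕ) : ℝ :=
  (n : ℝ) ^ (-(1/2 : ℝ)) * (2 * Real.log (Real.log n)) ^ (1/2 : ℝ)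

/-- `l_q(n) = (log n)^{1/q} (log log n)^{2/q}`. -/
def lq (q : ℝ) (n : ℕ) : ℝ :=
  Real.log n ^ (1/q) * Real.log (Real.log n) ^ (2/q)

/-- The sequence `ε` is i.i.d. -/
def IID (ε : ℤ → Ω → ℝ) : Prop :=
  (∀ i, Measurable (ε i)) ∧
    iIndepFun ε (ℙ : Measure Ω) ∧
    ∀ i, IdentDistrib (ε i) (ε 0) (ℙ : Measure Ω) (ℙ : Measure Ω)

/-- Condition (5): `E|ε|^α < ∞`. -/
def Cond5 (ε : ℤ → Ω → ℝ) (α : ℝ) : Prop :=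
  2 ≤ α ∧ Integrable (fun ω => |ε 0 ω| ^ α) (ℙ : Measure Ω)

/-- Condition (6): `∑_{k=i}^∞ c_k² = O(i^{−2/ρ} (log i)^{−3})`. -/
def Cond6 (c : ℕ → ℝ) (ρ : ℝ) : Prop :=
  ρ ∈ Set.Ioo (0:ℝ) (1/2) ∧
    ∃ C : ℝ, ∀ i : ℕ, 2 ≤ i →
      tailSq c (i : ℝ) ≤ C * (i : ℝ) ^ (-(2/ρ)) * Real.log i ^ (-(3:ℝ))

/-- Condition (7): `ε` has a density `f_ε`, twice differentiable, with
`sup_x (f_ε(x) + |f_ε′(x)| + |f_ε″(x)|) < ∞`. -/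
def Cond7 (ε : ℤ → Ω → ℝ) (fε fε' fε'' : ℝ → ℝ) : Prop :=
  (∀ x, 0 ≤ fε x) ∧
    Measure.map (ε 0) (ℙ : Measure Ω) =
      MeasureTheory.volume.withDensity (fun x => ENNReal.ofReal (fε x)) ∧
    (∀ x, HasDerivAt fε (fε' x) x) ∧ (∀ x, HasDerivAt fε' (fε'' x) x) ∧
    ∃ M : ℝ, ∀ x, fε x + |fε' x| + |fε'' x| ≤ M

/-- The basic setup: `ε` i.i.d., `c₀ = 1`, `∑|c_k| < ∞`, `F` the (continuous)
distribution function of `X_1`. -/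
def Setup (ε : ℤ → Ω → ℝ) (c : ℕ → ℝ) (F : ℝ → ℝ) : Prop :=
  IID ε ∧ c 0 = 1 ∧ (Summable fun k => |c k|) ∧
    F = cdf (Xproc c ε 1) ∧ Continuous F

/-- `f` is the density of `F` (as derivative of the distribution function). -/
def IsDensity (F f : ℝ → ℝ) : Prop :=
  (∀ x, 0 ≤ f x) ∧ ∀ x, HasDerivAt F (f x) x

/-- Kiefer conditions (K1)–(K2) on the interval `(a,b) ⊆ (0,1)`:
`f′∘Q` exists and is bounded on `(a,b)`, and `f∘Q` is bounded away from `0`. -/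
def Kiefer (F f f' : ℝ → ℝ) (a b : ℝ) : Prop :=
  (∀ y ∈ Set.Ioo a b, HasDerivAt f (f' (quant F y)) (quant F y)) ∧
    (∃ M : ℝ, ∀ y ∈ Set.Ioo a b, |f' (quant F y)| ≤ M) ∧
    ∃ δ : ℝ, 0 < δ ∧ ∀ y ∈ Set.Ioo a b, δ ≤ f (quant F y)

/-- A function slowly varying at infinity. -/
def SlowlyVarying (L : ℝ → ℝ) : Prop :=
  ∀ l : ℝ, 0 < l → Tendsto (fun t => L (l * t) / L t) atTop (nhds 1)

/-- Csörgő–Révész conditions (CsR1)–(CsR4) for `F` with density `f`,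
derivative `f'` and tail exponents `γ₁, γ₂`. -/
def CsorgoRevesz (F f f' : ℝ → ℝ) (γ₁ γ₂ : ℝ) : Prop :=
  (∀ x, 0 < F x → F x < 1 → HasDerivAt f (f' x) x) ∧
  (∀ x, 0 < F x → F x < 1 → 0 < f x) ∧
  0 < γ₁ ∧ 0 < γ₂ ∧
  (∃ L₁ : ℝ → ℝ, SlowlyVarying L₁ ∧
    Tendsto (fun y => f (quant F y) / (y ^ γ₁ * L₁ (1 / y)))
      (nhdsWithin 0 (Set.Ioi 0)) (nhds 1)) ∧
  (∃ L₂ : ℝ → ℝ, SlowlyVarying L₂ ∧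
    Tendsto (fun y => f (quant F y) / ((1 - y) ^ γ₂ * L₂ (1 / (1 - y))))
      (nhdsWithin 1 (Set.Iio 1)) (nhds 1)) ∧
  (∃ A : ℝ, Tendsto (fun y => f (quant F y)) (nhdsWithin 0 (Set.Ioi 0)) (nhds A) ∧
    (0 < A ∨ (A = 0 ∧ ∃ η : ℝ, 0 < η ∧ MonotoneOn (fun y => f (quant F y)) (Set.Ioo 0 η)))) ∧
  (∃ B : ℝ, Tendsto (fun y => f (quant F y)) (nhdsWithin 1 (Set.Iio 1)) (nhds B) ∧
    (0 < B ∨ (B = 0 ∧ ∃ η : ℝ, 0 < η ∧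
      AntitoneOn (fun y => f (quant F y)) (Set.Ioo (1 - η) 1))))
section AuxProof

open scoped ENNReal NNReal

variable {Ω : Type*} [MeasureSpace Ω] [IsProbabilityMeasure (ℙ : Measure Ω)]

/-- Tail sum of `|c|` from the truncation point. -/
private def Ttail (c : ℕ → ℝ) (ρ : ℝ) (i : ℕ) : ℝ :=
  ∑' k : ℕ, if trunc ρ i ≤ k then |c k| else 0

private lemma Ttail_nonneg (c : ℕ → ℝ) (ρ : ℝ) (i : ℕ) : 0 ≤ Ttail c ρ i :=
  tsum_nonneg fun k => by positivity

private lemma summable_ite_abs {c : ℕ → ℝ} (hc : Summable fun k => |c k|)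
    (p : ℕ → Prop) [DecidablePred p] :
    Summable fun k => if p k then |c k| else 0 :=
  Summable.of_nonneg_of_le (fun k => by positivity)
    (fun k => by split <;> simp [abs_nonneg]) hc

private lemma coeff_bound (c : ℕ → ℝ) (ρ : ℝ) (hc : Summable fun k => |c k|)
    (h6 : Cond6 c ρ) :
    ∃ S : ℝ, 0 ≤ S ∧ ∀ n : ℕ, ∑ i ∈ Finset.Icc 1 n, (Ttail c ρ i) ^ 2 ≤ S := by
  obtain ⟨⟨hρ0, hρh⟩, C₆, hC₆⟩ := h6
  have hρne : ρ ≠ 0 := ne_of_gt hρ0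
  have hL : ∀ k, |c k| ≤ ∑' j, |c j| := fun k => Summable.le_tsum hc k fun j _ => abs_nonneg _
  have hcsq : Summable fun k => (c k) ^ 2 := by
    refine Summable.of_nonneg_of_le (fun k => sq_nonneg _) (fun k => ?_)
      (hc.mul_left (∑' j, |c j|))
    calc (c k) ^ 2 = |c k| * |c k| := by rw [sq]; exact (abs_mul_abs_self _).symm
      _ ≤ (∑' j, |c j|) * |c k| := mul_le_mul_of_nonneg_right (hL k) (abs_nonneg _)
  have hck : ∀ k : ℕ, 2 ≤ k →
      (c k) ^ 2 ≤ C₆ * (k : ℝ) ^ (-(2/ρ)) * Real.log k ^ (-(3:ℝ)) := by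
    intro k hk
    refine le_trans ?_ (hC₆ k hk)
    have hsq : Summable fun j : ℕ => if (k:ℝ) ≤ (j:ℝ) then (c j) ^ 2 else 0 :=
      Summable.of_nonneg_of_le (fun j => by positivity)
        (fun j => by split <;> simp [sq_nonneg]) hcsq
    have h := Summable.le_tsum hsq k (fun j _ => by positivity)
    simpa [tailSq] using h
  set Cp := max C₆ 0 * Real.log 2 ^ (-(3:ℝ)) with hCp
  have hCp0 : 0 ≤ Cp :=
    mul_nonneg (le_max_right _ _) (Real.rpow_nonneg (Real.log_nonneg one_le_two) _)
  set K := Real.sqrt Cp with hKdef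
  have hK0 : 0 ≤ K := Real.sqrt_nonneg _
  have hKb : ∀ k : ℕ, 2 ≤ k → |c k| ≤ K * (k:ℝ) ^ (-(1/ρ)) := by
    intro k hk
    have hk2 : (2:ℝ) ≤ (k:ℝ) := by exact_mod_cast hk
    have hkpos : (0:ℝ) < k := by linarith
    have hlog2 : 0 < Real.log 2 := Real.log_pos one_lt_two
    have hlogk : Real.log 2 ≤ Real.log k := Real.log_le_log (by norm_num) hk2
    have h1 : Real.log k ^ (-(3:ℝ)) ≤ Real.log 2 ^ (-(3:ℝ)) := by
      rw [Real.rpow_neg (by linarith), Real.rpow_neg hlog2.le]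
      exact inv_anti₀ (Real.rpow_pos_of_pos hlog2 _)
        (Real.rpow_le_rpow hlog2.le hlogk (by norm_num))
    have hrp : (0:ℝ) ≤ (k:ℝ) ^ (-(2/ρ)) := Real.rpow_nonneg hkpos.le _
    have h2 : (c k) ^ 2 ≤ Cp * (k:ℝ) ^ (-(2/ρ)) := by
      calc (c k) ^ 2 ≤ C₆ * (k:ℝ) ^ (-(2/ρ)) * Real.log k ^ (-(3:ℝ)) := hck k hk
        _ ≤ max C₆ 0 * (k:ℝ) ^ (-(2/ρ)) * Real.log k ^ (-(3:ℝ)) := by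
            apply mul_le_mul_of_nonneg_right _ (Real.rpow_nonneg (Real.log_nonneg (by linarith)) _)
            exact mul_le_mul_of_nonneg_right (le_max_left _ _) hrp
        _ ≤ max C₆ 0 * (k:ℝ) ^ (-(2/ρ)) * Real.log 2 ^ (-(3:ℝ)) :=
            mul_le_mul_of_nonneg_left h1 (mul_nonneg (le_max_right _ _) hrp)
        _ = Cp * (k:ℝ) ^ (-(2/ρ)) := by rw [hCp]; ring
    have hKK : (K * (k:ℝ) ^ (-(1/ρ))) ^ 2 = Cp * (k:ℝ) ^ (-(2/ρ)) := by
      rw [mul_pow, hKdef, Real.sq_sqrt hCp0]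
      congr 1
      rw [← Real.rpow_natCast ((k:ℝ) ^ (-(1/ρ))) 2, ← Real.rpow_mul hkpos.le]
      congr 1
      push_cast
      ring
    calc |c k| = Real.sqrt ((c k) ^ 2) := (Real.sqrt_sq_eq_abs _).symm
      _ ≤ Real.sqrt ((K * (k:ℝ) ^ (-(1/ρ))) ^ 2) := Real.sqrt_le_sqrt (by rw [hKK]; exact h2)
      _ = K * (k:ℝ) ^ (-(1/ρ)) := Real.sqrt_sq (by positivity)
  have h4ρ : (0:ℝ) < 4 * ρ := by linarith
  set s := 3 / (4 * ρ) - 1 / 2 with hs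
  have hs0 : 0 < s := by
    rw [hs, sub_pos, div_lt_div_iff₀ (by norm_num) h4ρ]
    linarith
  have hsexp : s - 1/ρ < -1 := by
    have h : s - 1/ρ = 1/2 - 1/(4*ρ) - 1 := by rw [hs]; field_simp; ring
    have hinv : (1:ℝ)/2 < 1/(4*ρ) := by
      rw [div_lt_div_iff₀ (by norm_num) h4ρ]
      linarith
    rw [h]; linarith
  have hρs : 1 < 2 * (ρ * s) := by
    have h : ρ * s = 3/4 - ρ/2 := by rw [hs]; field_simp
    rw [h]; linarith
  set d : ℕ → ℝ := fun k => |c k| * (k:ℝ) ^ s with hd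
  have hd0 : ∀ k, 0 ≤ d k := fun k =>
    mul_nonneg (abs_nonneg _) (Real.rpow_nonneg (Nat.cast_nonneg _) _)
  have hdsum : Summable d := by
    rw [← summable_nat_add_iff 2]
    have h := Real.summable_nat_rpow.2 hsexp
    have h2 := (summable_nat_add_iff 2).2 h
    refine Summable.of_nonneg_of_le (fun k => hd0 _) (fun k => ?_) (h2.mul_left K)
    have hk2 : 2 ≤ k + 2 := by omega
    have hkpos : (0:ℝ) < ((k + 2 : ℕ) : ℝ) := by positivity
    calc d (k + 2) = |c (k + 2)| * ((k + 2 : ℕ) : ℝ) ^ s := rfl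
      _ ≤ K * ((k + 2 : ℕ) : ℝ) ^ (-(1/ρ)) * ((k + 2 : ℕ) : ℝ) ^ s :=
          mul_le_mul_of_nonneg_right (hKb _ hk2) (Real.rpow_nonneg hkpos.le _)
      _ = K * ((k + 2 : ℕ) : ℝ) ^ (s - 1/ρ) := by
          rw [mul_assoc, ← Real.rpow_add hkpos]
          congr 2
          ring
  set D := ∑' k, d k with hD
  have hD0 : 0 ≤ D := tsum_nonneg hd0
  have hTb : ∀ i : ℕ, 1 ≤ i → Ttail c ρ i ≤ D * (i:ℝ) ^ (-(ρ * s)) := by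
    intro i hi
    have hipos : (0:ℝ) < i := by exact_mod_cast hi
    have hiρ : (0:ℝ) < (i:ℝ) ^ ρ := Real.rpow_pos_of_pos hipos _
    have ht1 : (i:ℝ) ^ ρ ≤ (trunc ρ i : ℝ) := Nat.le_ceil _
    have htpos : (0:ℝ) < (trunc ρ i : ℝ) := lt_of_lt_of_le hiρ ht1
    have key : ∀ k : ℕ, (if trunc ρ i ≤ k then |c k| else 0) ≤ (i:ℝ) ^ (-(ρ * s)) * d k := by
      intro k
      split_ifs with h
      · have hkt : (trunc ρ i : ℝ) ≤ (k:ℝ) := by exact_mod_cast h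
        have hkpos : (0:ℝ) < k := lt_of_lt_of_le htpos hkt
        have h2 : ((i:ℝ) ^ ρ) ^ (-s) = (i:ℝ) ^ (-(ρ * s)) := by
          rw [← Real.rpow_mul hipos.le]
          congr 1
          ring
        have h1 : (k:ℝ) ^ (-s) ≤ (i:ℝ) ^ (-(ρ * s)) := by
          rw [← h2, Real.rpow_neg hkpos.le, Real.rpow_neg hiρ.le]
          exact inv_anti₀ (Real.rpow_pos_of_pos hiρ _)
            (Real.rpow_le_rpow hiρ.le (le_trans ht1 hkt) hs0.le)
        have h3 : d k * (k:ℝ) ^ (-s) = |c k| := by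
          rw [hd]
          dsimp only
          rw [mul_assoc, ← Real.rpow_add hkpos, add_neg_cancel, Real.rpow_zero, mul_one]
        rw [← h3]
        calc d k * (k:ℝ) ^ (-s) ≤ d k * (i:ℝ) ^ (-(ρ * s)) :=
              mul_le_mul_of_nonneg_left h1 (hd0 k)
          _ = (i:ℝ) ^ (-(ρ * s)) * d k := mul_comm _ _
      · positivity
    have hsl : Summable fun k : ℕ => if trunc ρ i ≤ k then |c k| else 0 :=
      summable_ite_abs hc _
    calc Ttail c ρ i ≤ ∑' k, (i:ℝ) ^ (-(ρ * s)) * d k :=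
          Summable.tsum_le_tsum key hsl (hdsum.mul_left _)
      _ = (i:ℝ) ^ (-(ρ * s)) * D := tsum_mul_left
      _ = D * (i:ℝ) ^ (-(ρ * s)) := mul_comm _ _
  have hsum2 : Summable fun i : ℕ => D ^ 2 * (i:ℝ) ^ (-(2 * (ρ * s))) :=
    (Real.summable_nat_rpow.2 (by linarith)).mul_left _
  refine ⟨∑' i : ℕ, D ^ 2 * (i:ℝ) ^ (-(2 * (ρ * s))),
    tsum_nonneg (fun i => by positivity), fun n => ?_⟩
  calc ∑ i ∈ Finset.Icc 1 n, (Ttail c ρ i) ^ 2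
      ≤ ∑ i ∈ Finset.Icc 1 n, D ^ 2 * (i:ℝ) ^ (-(2 * (ρ * s))) := by
        apply Finset.sum_le_sum
        intro i hi
        have hi1 : 1 ≤ i := (Finset.mem_Icc.1 hi).1
        have hipos : (0:ℝ) < i := by exact_mod_cast hi1
        calc (Ttail c ρ i) ^ 2 ≤ (D * (i:ℝ) ^ (-(ρ * s))) ^ 2 :=
              pow_le_pow_left₀ (Ttail_nonneg c ρ i) (hTb i hi1) 2
          _ = D ^ 2 * (i:ℝ) ^ (-(2 * (ρ * s))) := by
              rw [mul_pow]
              congr 1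
              rw [← Real.rpow_natCast ((i:ℝ) ^ (-(ρ * s))) 2, ← Real.rpow_mul hipos.le]
              congr 1
              push_cast
              ring
    _ ≤ ∑' i : ℕ, D ^ 2 * (i:ℝ) ^ (-(2 * (ρ * s))) :=
        Summable.sum_le_tsum _ (fun i _ => by positivity) hsum2

private lemma lintegral_comp_eps {ε : ℤ → Ω → ℝ} (hm : ∀ i, Measurable (ε i))
    (hid : ∀ i, IdentDistrib (ε i) (ε 0) (ℙ : Measure Ω) (ℙ : Measure Ω))
    {g : ℝ → ℝ≥0∞} (hg : Measurable g) (i : ℤ) :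
    ∫⁻ ω, g (ε i ω) ∂(ℙ : Measure Ω) = ∫⁻ ω, g (ε 0 ω) ∂(ℙ : Measure Ω) := by
  rw [← lintegral_map hg (hm i), ← lintegral_map hg (hm 0), (hid i).map_eq]

private lemma moment_bounds {ε : ℤ → Ω → ℝ} {α : ℝ} (h5 : Cond5 ε α) :
    (∫⁻ ω, ENNReal.ofReal |ε 0 ω| ∂(ℙ : Measure Ω)) ≠ ⊤ ∧
      (∫⁻ ω, (ENNReal.ofReal |ε 0 ω|) ^ 2 ∂(ℙ : Measure Ω)) ≠ ⊤ := by
  obtain ⟨hα, hint⟩ := h5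
  have hfin : (∫⁻ ω, ENNReal.ofReal (|ε 0 ω| ^ α) ∂(ℙ : Measure Ω)) ≠ ⊤ := by
    have h2 := hint.2
    rw [hasFiniteIntegral_iff_ofReal
      (ae_of_all _ fun ω => Real.rpow_nonneg (abs_nonneg _) _)] at h2
    exact h2.ne
  have hα1 : (1:ℝ) ≤ α := by linarith
  have key1 : ∀ ω, ENNReal.ofReal |ε 0 ω| ≤ 1 + ENNReal.ofReal (|ε 0 ω| ^ α) := by
    intro ω
    rcases le_total (|ε 0 ω|) 1 with h1 | h1
    · calc ENNReal.ofReal |ε 0 ω| ≤ 1 := ENNReal.ofReal_le_one.2 h1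
        _ ≤ _ := le_self_add
    · have h2 : |ε 0 ω| ≤ |ε 0 ω| ^ α := by
        calc |ε 0 ω| = |ε 0 ω| ^ (1:ℝ) := (Real.rpow_one _).symm
          _ ≤ |ε 0 ω| ^ α := Real.rpow_le_rpow_of_exponent_le h1 hα1
      calc ENNReal.ofReal |ε 0 ω| ≤ ENNReal.ofReal (|ε 0 ω| ^ α) :=
            ENNReal.ofReal_le_ofReal h2
        _ ≤ _ := le_add_self
  have key2 : ∀ ω, (ENNReal.ofReal |ε 0 ω|) ^ 2 ≤ 1 + ENNReal.ofReal (|ε 0 ω| ^ α) := by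
    intro ω
    rcases le_total (|ε 0 ω|) 1 with h1 | h1
    · calc (ENNReal.ofReal |ε 0 ω|) ^ 2 ≤ 1 ^ 2 := by
            exact pow_le_pow_left' (ENNReal.ofReal_le_one.2 h1) 2
        _ ≤ _ := by simp
    · have h2 : |ε 0 ω| ^ (2:ℕ) ≤ |ε 0 ω| ^ α := by
        rw [← Real.rpow_natCast]
        exact Real.rpow_le_rpow_of_exponent_le h1 (by exact_mod_cast hα)
      calc (ENNReal.ofReal |ε 0 ω|) ^ 2 = ENNReal.ofReal (|ε 0 ω| ^ (2:ℕ)) := by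
            rw [ENNReal.ofReal_pow (abs_nonneg _)]
        _ ≤ ENNReal.ofReal (|ε 0 ω| ^ α) := ENNReal.ofReal_le_ofReal h2
        _ ≤ _ := le_add_self
  have hbound : (∫⁻ ω, (1 + ENNReal.ofReal (|ε 0 ω| ^ α)) ∂(ℙ : Measure Ω)) ≠ ⊤ := by
    rw [lintegral_add_left measurable_const]
    simp only [lintegral_one, measure_univ, one_mul]
    exact ENNReal.add_ne_top.2 ⟨ENNReal.one_ne_top, hfin⟩
  exact ⟨ne_top_of_le_ne_top hbound (lintegral_mono key1),
    ne_top_of_le_ne_top hbound (lintegral_mono key2)⟩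

private lemma ae_summable_abs {ε : ℤ → Ω → ℝ} {c : ℕ → ℝ}
    (hm : ∀ i, Measurable (ε i))
    (hid : ∀ i, IdentDistrib (ε i) (ε 0) (ℙ : Measure Ω) (ℙ : Measure Ω))
    (hc : Summable fun k => |c k|)
    (hε1 : (∫⁻ ω, ENNReal.ofReal |ε 0 ω| ∂(ℙ : Measure Ω)) ≠ ⊤) (i : ℤ) :
    ∀ᵐ ω ∂(ℙ : Measure Ω), Summable fun k : ℕ => |c k| * |ε (i - k) ω| := by
  have hmeask : ∀ k : ℕ, Measurable fun ω => ENNReal.ofReal (|c k| * |ε (i - k) ω|) :=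
    fun k => ((hm _).abs.const_mul _).ennreal_ofReal
  have hlt : (∫⁻ ω, ∑' k : ℕ, ENNReal.ofReal (|c k| * |ε (i - k) ω|) ∂(ℙ : Measure Ω)) < ⊤ := by
    rw [lintegral_tsum (fun k => (hmeask k).aemeasurable)]
    have heach : ∀ k : ℕ, (∫⁻ ω, ENNReal.ofReal (|c k| * |ε (i - k) ω|) ∂(ℙ : Measure Ω))
        = ENNReal.ofReal |c k| * ∫⁻ ω, ENNReal.ofReal |ε 0 ω| ∂(ℙ : Measure Ω) := by
      intro k
      have h1 : ∀ ω, ENNReal.ofReal (|c k| * |ε (i - k) ω|)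
          = ENNReal.ofReal |c k| * ENNReal.ofReal (|ε (i - k) ω|) :=
        fun ω => ENNReal.ofReal_mul (abs_nonneg _)
      simp_rw [h1]
      rw [lintegral_const_mul _ ((hm _).abs.ennreal_ofReal)]
      congr 1
      exact lintegral_comp_eps hm hid (measurable_id.abs.ennreal_ofReal) _
    simp_rw [heach]
    rw [ENNReal.tsum_mul_right]
    apply ENNReal.mul_lt_top
    · rw [← ENNReal.ofReal_tsum_of_nonneg (fun k => abs_nonneg _) hc]
      exact ENNReal.ofReal_lt_top
    · exact hε1.lt_top
  filter_upwards [ae_lt_top (Measurable.ennreal_tsum hmeask) hlt.ne] with ω hω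
  have h1 : Summable fun k : ℕ => (ENNReal.ofReal (|c k| * |ε (i - k) ω|)).toReal :=
    ENNReal.summable_toReal hω.ne
  refine h1.congr fun k => ?_
  exact ENNReal.toReal_ofReal (by positivity)

set_option maxHeartbeats 1000000 in
private lemma Dq_bound {ε : ℤ → Ω → ℝ} {c : ℕ → ℝ} {ρ : ℝ}
    (hm : ∀ i, Measurable (ε i))
    (hid : ∀ i, IdentDistrib (ε i) (ε 0) (ℙ : Measure Ω) (ℙ : Measure Ω))
    (hc : Summable fun k => |c k|)
    (hε1 : (∫⁻ ω, ENNReal.ofReal |ε 0 ω| ∂(ℙ : Measure Ω)) ≠ ⊤)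
    (hV : (∫⁻ ω, (ENNReal.ofReal |ε 0 ω|) ^ 2 ∂(ℙ : Measure Ω)) ≠ ⊤)
    (i : ℕ) (hi : 1 ≤ i) :
    Integrable (fun ω => (Xlag c ε (i:ℤ) ω - XlagHat c ε ρ i ω) ^ 2) (ℙ : Measure Ω) ∧
      (∫ ω, (Xlag c ε (i:ℤ) ω - XlagHat c ε ρ i ω) ^ 2 ∂(ℙ : Measure Ω)) ≤
        2 * (∫⁻ ω, (ENNReal.ofReal |ε 0 ω|) ^ 2 ∂(ℙ : Measure Ω)).toReal * (Ttail c ρ i) ^ 2 := by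
  set V := ∫⁻ ω, (ENNReal.ofReal |ε 0 ω|) ^ 2 ∂(ℙ : Measure Ω) with hVdef
  set t := trunc ρ i with htdef
  have htr : 1 ≤ t := by
    rw [htdef, trunc]
    rw [Nat.one_le_iff_ne_zero, Ne, Nat.ceil_eq_zero, not_le]
    exact Real.rpow_pos_of_pos (by exact_mod_cast hi) _
  have hae := ae_summable_abs hm hid hc hε1 (i : ℤ)
  -- pointwise helpers
  have habs_le : ∀ (p : ℕ → Prop) [DecidablePred p] (ω : Ω) (k : ℕ),
      |if p k then c k * ε ((i:ℤ) - k) ω else 0| ≤ |c k| * |ε ((i:ℤ) - k) ω| := by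
    intro p _ ω k
    split
    · rw [abs_mul]
    · simp [abs_nonneg, mul_nonneg]
  set tailA : Ω → ℝ := fun ω => ∑' k : ℕ, if t ≤ k then |c k| * |ε ((i:ℤ) - k) ω| else 0
    with htailA
  have hdiff : ∀ᵐ ω ∂(ℙ : Measure Ω),
      |Xlag c ε (i:ℤ) ω - XlagHat c ε ρ i ω| ≤ tailA ω := by
    filter_upwards [hae] with ω hω
    have hsumg : Summable fun k : ℕ => if t ≤ k then c k * ε ((i:ℤ) - k) ω else 0 := by
      apply Summable.of_abs
      exact Summable.of_nonneg_of_le (fun k => abs_nonneg _) (habs_le _ ω) hω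
    have hsumh : Summable fun k : ℕ =>
        if k ∈ Finset.Ico 1 t then c k * ε ((i:ℤ) - k) ω else 0 := by
      apply Summable.of_abs
      exact Summable.of_nonneg_of_le (fun k => abs_nonneg _) (habs_le _ ω) hω
    have hfgh : ∀ k : ℕ, (if 1 ≤ k then c k * ε ((i:ℤ) - k) ω else 0)
        = (if t ≤ k then c k * ε ((i:ℤ) - k) ω else 0)
          + (if k ∈ Finset.Ico 1 t then c k * ε ((i:ℤ) - k) ω else 0) := by
      intro k
      by_cases h1 : 1 ≤ k
      · by_cases h2 : t ≤ k
        · have h3 : k ∉ Finset.Ico 1 t := by simp only [Finset.mem_Ico]; omega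
          simp [h1, h2, h3]
        · have h3 : k ∈ Finset.Ico 1 t := by simp only [Finset.mem_Ico]; omega
          simp [h1, h2, h3]
      · have h2 : ¬ t ≤ k := by omega
        have h3 : k ∉ Finset.Ico 1 t := by simp only [Finset.mem_Ico]; omega
        simp [h1, h2, h3]
    have hXsplit : Xlag c ε (i:ℤ) ω
        = (∑' k : ℕ, if t ≤ k then c k * ε ((i:ℤ) - k) ω else 0) + XlagHat c ε ρ i ω := by
      have hXhat : (∑' k : ℕ, if k ∈ Finset.Ico 1 t then c k * ε ((i:ℤ) - k) ω else 0)
          = XlagHat c ε ρ i ω := by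
        rw [tsum_eq_sum (s := Finset.Ico 1 t) (fun b hb => if_neg hb)]
        exact Finset.sum_congr rfl fun k hk => if_pos hk
      rw [Xlag, tsum_congr hfgh, Summable.tsum_add hsumg hsumh, hXhat]
    have hXdiff : Xlag c ε (i:ℤ) ω - XlagHat c ε ρ i ω
        = ∑' k : ℕ, if t ≤ k then c k * ε ((i:ℤ) - k) ω else 0 := by
      rw [hXsplit]; ring
    rw [hXdiff]
    have habs : Summable fun k : ℕ => |if t ≤ k then c k * ε ((i:ℤ) - k) ω else 0| :=
      Summable.of_nonneg_of_le (fun k => abs_nonneg _) (habs_le _ ω) hω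
    have hnorm : ‖∑' k : ℕ, if t ≤ k then c k * ε ((i:ℤ) - k) ω else 0‖
        ≤ ∑' k : ℕ, ‖if t ≤ k then c k * ε ((i:ℤ) - k) ω else 0‖ :=
      norm_tsum_le_tsum_norm (habs.congr fun k => (Real.norm_eq_abs _).symm)
    simp only [Real.norm_eq_abs] at hnorm
    calc |∑' k : ℕ, if t ≤ k then c k * ε ((i:ℤ) - k) ω else 0|
        ≤ ∑' k : ℕ, |if t ≤ k then c k * ε ((i:ℤ) - k) ω else 0| := hnorm
      _ = tailA ω := by
          refine tsum_congr fun k => ?_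
          split_ifs <;> simp [abs_mul]
  -- the ENNReal machinery
  set b : ℕ → ℝ≥0∞ := fun k => ENNReal.ofReal (if t ≤ k then |c k| else 0) with hb
  set E : ℕ → Ω → ℝ≥0∞ := fun k ω => ENNReal.ofReal |ε ((i:ℤ) - k) ω| with hE
  have hEmeas : ∀ k, Measurable (E k) := fun k =>
    (hm _).abs.ennreal_ofReal
  have hVk : ∀ k, (∫⁻ ω, (E k ω) ^ 2 ∂(ℙ : Measure Ω)) = V := fun k =>
    lintegral_comp_eps hm hid
      ((measurable_id.abs.ennreal_ofReal).pow_const 2) _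
  have htailAsum : ∀ᵐ ω ∂(ℙ : Measure Ω),
      Summable fun k : ℕ => if t ≤ k then |c k| * |ε ((i:ℤ) - k) ω| else 0 := by
    filter_upwards [hae] with ω hω
    exact Summable.of_nonneg_of_le (fun k => by positivity)
      (fun k => by split <;> simp [mul_nonneg, abs_nonneg]) hω
  have hstep1 : ∀ᵐ ω ∂(ℙ : Measure Ω),
      ENNReal.ofReal ((Xlag c ε (i:ℤ) ω - XlagHat c ε ρ i ω) ^ 2)
        ≤ (∑' k : ℕ, b k * E k ω) ^ 2 := by
    filter_upwards [hdiff, htailAsum] with ω h1 h2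
    have h3 : ENNReal.ofReal ((Xlag c ε (i:ℤ) ω - XlagHat c ε ρ i ω) ^ 2)
        = (ENNReal.ofReal |Xlag c ε (i:ℤ) ω - XlagHat c ε ρ i ω|) ^ 2 := by
      rw [← ENNReal.ofReal_pow (abs_nonneg _), sq_abs]
    have h5 : ENNReal.ofReal (tailA ω) = ∑' k : ℕ, b k * E k ω := by
      rw [htailA]
      dsimp only
      rw [ENNReal.ofReal_tsum_of_nonneg (fun k => by positivity) h2]
      refine tsum_congr fun k => ?_
      by_cases hk : t ≤ k
      · simp only [hb, hE, hk, if_pos]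
        exact ENNReal.ofReal_mul (abs_nonneg _)
      · simp [hb, hk]
    rw [h3, ← h5]
    exact pow_le_pow_left' (ENNReal.ofReal_le_ofReal h1) 2
  have hG2 : (∫⁻ ω, (∑' k : ℕ, b k * E k ω) ^ 2 ∂(ℙ : Measure Ω))
      ≤ 2 * V * (∑' k, b k) ^ 2 := by
    have hexp : ∀ ω, (∑' k : ℕ, b k * E k ω) ^ 2
        = ∑' k : ℕ, ∑' l : ℕ, (b k * E k ω) * (b l * E l ω) := by
      intro ω
      rw [sq, ← ENNReal.tsum_mul_right]
      exact tsum_congr fun k => (ENNReal.tsum_mul_left).symm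
    simp_rw [hexp]
    have hmeaskl : ∀ k l : ℕ, Measurable fun ω => (b k * E k ω) * (b l * E l ω) :=
      fun k l => ((hEmeas k).const_mul _).mul ((hEmeas l).const_mul _)
    rw [lintegral_tsum (fun k =>
      (Measurable.ennreal_tsum (fun l => hmeaskl k l)).aemeasurable)]
    have hinner : ∀ k : ℕ, (∫⁻ ω, ∑' l : ℕ, (b k * E k ω) * (b l * E l ω) ∂(ℙ : Measure Ω))
        = ∑' l : ℕ, ∫⁻ ω, (b k * E k ω) * (b l * E l ω) ∂(ℙ : Measure Ω) :=
      fun k => lintegral_tsum (fun l => (hmeaskl k l).aemeasurable)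
    have hkl : ∀ k l : ℕ, (∫⁻ ω, (b k * E k ω) * (b l * E l ω) ∂(ℙ : Measure Ω))
        ≤ b k * b l * (2 * V) := by
      intro k l
      have h1 : ∀ ω : Ω, (b k * E k ω) * (b l * E l ω) = (b k * b l) * (E k ω * E l ω) := by
        intro ω; ring
      simp_rw [h1]
      rw [lintegral_const_mul _ (f := fun ω => E k ω * E l ω) ((hEmeas k).mul (hEmeas l))]
      have h2 : ∀ ω, E k ω * E l ω ≤ (E k ω) ^ 2 + (E l ω) ^ 2 := by
        intro ω
        rcases le_total (E k ω) (E l ω) with h | h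
        · calc E k ω * E l ω ≤ E l ω * E l ω := mul_le_mul_left h _
            _ = (E l ω) ^ 2 := (sq _).symm
            _ ≤ _ := le_add_self
        · calc E k ω * E l ω ≤ E k ω * E k ω := mul_le_mul_right h _
            _ = (E k ω) ^ 2 := (sq _).symm
            _ ≤ _ := le_self_add
      have h3 : (∫⁻ ω, E k ω * E l ω ∂(ℙ : Measure Ω)) ≤ 2 * V := by
        calc (∫⁻ ω, E k ω * E l ω ∂(ℙ : Measure Ω))
            ≤ ∫⁻ ω, ((E k ω) ^ 2 + (E l ω) ^ 2) ∂(ℙ : Measure Ω) := lintegral_mono h2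
          _ = V + V := by
              rw [lintegral_add_left ((hEmeas k).pow_const 2), hVk k, hVk l]
          _ = 2 * V := (two_mul V).symm
      exact mul_le_mul_right h3 _
    calc (∑' k : ℕ, ∫⁻ ω, ∑' l : ℕ, (b k * E k ω) * (b l * E l ω) ∂(ℙ : Measure Ω))
        = ∑' k : ℕ, ∑' l : ℕ, ∫⁻ ω, (b k * E k ω) * (b l * E l ω) ∂(ℙ : Measure Ω) :=
          tsum_congr hinner
      _ ≤ ∑' k : ℕ, ∑' l : ℕ, b k * b l * (2 * V) :=
          ENNReal.tsum_le_tsum fun k => ENNReal.tsum_le_tsum fun l => hkl k l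
      _ = (∑' k, b k) * ((∑' l, b l) * (2 * V)) := by
          rw [← ENNReal.tsum_mul_right]
          refine tsum_congr fun k => ?_
          rw [← ENNReal.tsum_mul_right, ← ENNReal.tsum_mul_left]
          exact tsum_congr fun l => by ring
      _ = 2 * V * (∑' k, b k) ^ 2 := by rw [sq]; ring
  have hbsum : (∑' k, b k) = ENNReal.ofReal (Ttail c ρ i) := by
    rw [Ttail]
    rw [ENNReal.ofReal_tsum_of_nonneg (fun k => by positivity) (summable_ite_abs hc _)]
  have hlint : (∫⁻ ω, ENNReal.ofReal ((Xlag c ε (i:ℤ) ω - XlagHat c ε ρ i ω) ^ 2)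
      ∂(ℙ : Measure Ω)) ≤ 2 * V * (ENNReal.ofReal (Ttail c ρ i)) ^ 2 := by
    calc (∫⁻ ω, ENNReal.ofReal ((Xlag c ε (i:ℤ) ω - XlagHat c ε ρ i ω) ^ 2) ∂(ℙ : Measure Ω))
        ≤ ∫⁻ ω, (∑' k : ℕ, b k * E k ω) ^ 2 ∂(ℙ : Measure Ω) := lintegral_mono_ae hstep1
      _ ≤ 2 * V * (∑' k, b k) ^ 2 := hG2
      _ = 2 * V * (ENNReal.ofReal (Ttail c ρ i)) ^ 2 := by rw [hbsum]
  have hRHSne : 2 * V * (ENNReal.ofReal (Ttail c ρ i)) ^ 2 ≠ ⊤ := by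
    apply ENNReal.mul_ne_top (ENNReal.mul_ne_top (by simp) hV)
    exact ENNReal.pow_ne_top ENNReal.ofReal_ne_top
  have hXlagAE : AEMeasurable (Xlag c ε (i:ℤ)) (ℙ : Measure Ω) := by
    apply aemeasurable_of_tendsto_metrizable_ae'
      (f := fun N ω => ∑ k ∈ Finset.range N, if 1 ≤ k then c k * ε ((i:ℤ) - k) ω else 0)
    · intro N
      refine (Finset.measurable_sum _ (fun k _ => ?_)).aemeasurable
      split
      · exact (hm _).const_mul _
      · exact measurable_const
    · filter_upwards [hae] with ω hω
      have hsumf : Summable fun k : ℕ => if 1 ≤ k then c k * ε ((i:ℤ) - k) ω else 0 := by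
        apply Summable.of_abs
        exact Summable.of_nonneg_of_le (fun k => abs_nonneg _) (habs_le _ ω) hω
      exact hsumf.hasSum.tendsto_sum_nat
  have hXhatmeas : Measurable (XlagHat c ε ρ i) :=
    Finset.measurable_sum _ fun k _ => (hm _).const_mul _
  have hDqAE : AEStronglyMeasurable
      (fun ω => (Xlag c ε (i:ℤ) ω - XlagHat c ε ρ i ω) ^ 2) (ℙ : Measure Ω) :=
    ((hXlagAE.sub hXhatmeas.aemeasurable).pow_const 2).aestronglyMeasurable
  have hInt : Integrable (fun ω => (Xlag c ε (i:ℤ) ω - XlagHat c ε ρ i ω) ^ 2)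
      (ℙ : Measure Ω) := by
    refine ⟨hDqAE, ?_⟩
    rw [hasFiniteIntegral_iff_ofReal (ae_of_all _ fun ω => sq_nonneg _)]
    exact lt_of_le_of_lt hlint hRHSne.lt_top
  refine ⟨hInt, ?_⟩
  rw [integral_eq_lintegral_of_nonneg_ae (ae_of_all _ fun ω => sq_nonneg _) hDqAE]
  refine le_trans (ENNReal.toReal_mono hRHSne hlint) (le_of_eq ?_)
  rw [ENNReal.toReal_mul, ENNReal.toReal_mul, ENNReal.toReal_pow,
    ENNReal.toReal_ofReal (Ttail_nonneg c ρ i), ENNReal.toReal_ofNat]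

private lemma lip_of_cond7 {ε : ℤ → Ω → ℝ} {fε fε' fε'' : ℝ → ℝ}
    (h7 : Cond7 ε fε fε' fε'') :
    ∃ M : ℝ, 0 ≤ M ∧ ∀ a b : ℝ, |fε a - fε b| ≤ M * |a - b| := by
  obtain ⟨hf0, -, hd1, hd2, M, hM⟩ := h7
  have hM0 : 0 ≤ M :=
    le_trans (add_nonneg (add_nonneg (hf0 0) (abs_nonneg _)) (abs_nonneg _)) (hM 0)
  have hd' : ∀ x, |fε' x| ≤ M := fun x => by
    have h1 := hM x; have h2 := hf0 x; have h3 := abs_nonneg (fε'' x); linarith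
  have hdiff : Differentiable ℝ fε := fun x => (hd1 x).differentiableAt
  have hL : LipschitzWith (Real.toNNReal M) fε := by
    apply lipschitzWith_of_nnnorm_deriv_le hdiff
    intro x
    rw [(hd1 x).deriv, ← NNReal.coe_le_coe, Real.coe_toNNReal _ hM0]
    simpa [Real.norm_eq_abs] using hd' x
  refine ⟨M, hM0, fun a b => ?_⟩
  have h := hL.dist_le_mul a b
  simpa [Real.dist_eq, Real.coe_toNNReal _ hM0] using h

end AuxProof
/-- Equation (15): under (5), (6), (7),
`E sup_{x≤u≤y} |f̂_n*(u) − f_n*(u)|² ≤ C/n`. -/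
theorem sup_sq_conditional_density_truncation
    {Ω : Type*} [MeasureSpace Ω] [IsProbabilityMeasure (ℙ : Measure Ω)]
    (ε : ℤ → Ω → ℝ) (c : ℕ → ℝ) (F fε fε' fε'' : ℝ → ℝ) (α ρ : ℝ)
    (hsetup : Setup ε c F)
    (h5 : Cond5 ε α) (h6 : Cond6 c ρ) (h7 : Cond7 ε fε fε' fε'') :
    ∃ C : ℝ, ∀ n : ℕ, 1 ≤ n → ∀ x y : ℝ, x < y →
      ∫ ω, (⨆ u ∈ Set.Icc x y,
          |fnStarHat c ε fε ρ n u ω - fnStar c ε fε n u ω|) ^ 2 ∂(ℙ : Measure Ω) ≤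
        C / n := by
  obtain ⟨⟨hm, hind, hid⟩, hc0, hcabs, hFdef, hFcont⟩ := hsetup
  obtain ⟨M, hM0, hMlip⟩ := lip_of_cond7 h7
  obtain ⟨hε1, hV⟩ := moment_bounds h5
  obtain ⟨S, hS0, hSb⟩ := coeff_bound c ρ hcabs h6
  set Vr := (∫⁻ ω, (ENNReal.ofReal |ε 0 ω|) ^ 2 ∂(ℙ : Measure Ω)).toReal with hVr
  have hVr0 : 0 ≤ Vr := ENNReal.toReal_nonneg
  refine ⟨M ^ 2 * (2 * Vr * S), ?_⟩
  intro n hn x y hxy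
  have hn0 : (0:ℝ) < n := by exact_mod_cast hn
  have hDq : ∀ i ∈ Finset.Icc 1 n,
      Integrable (fun ω => (Xlag c ε (i:ℤ) ω - XlagHat c ε ρ i ω) ^ 2) (ℙ : Measure Ω) ∧
        (∫ ω, (Xlag c ε (i:ℤ) ω - XlagHat c ε ρ i ω) ^ 2 ∂(ℙ : Measure Ω)) ≤
          2 * Vr * (Ttail c ρ i) ^ 2 :=
    fun i hi => Dq_bound hm hid hcabs hε1 hV i (Finset.mem_Icc.1 hi).1
  set g : Ω → ℝ :=
    fun ω => M ^ 2 / n * ∑ i ∈ Finset.Icc 1 n, (Xlag c ε (i:ℤ) ω - XlagHat c ε ρ i ω) ^ 2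
    with hg
  have hgint : Integrable g (ℙ : Measure Ω) := by
    rw [hg]
    exact (integrable_finset_sum _ (fun i hi => (hDq i hi).1)).const_mul _
  have hfg : ∀ ω, (⨆ u ∈ Set.Icc x y,
      |fnStarHat c ε fε ρ n u ω - fnStar c ε fε n u ω|) ^ 2 ≤ g ω := by
    intro ω
    set A := ∑ i ∈ Finset.Icc 1 n, |Xlag c ε (i:ℤ) ω - XlagHat c ε ρ i ω| with hA
    have hA0 : 0 ≤ A := Finset.sum_nonneg fun i _ => abs_nonneg _
    set R := M * ((n:ℝ)⁻¹ * A) with hR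
    have hR0 : 0 ≤ R := mul_nonneg hM0 (mul_nonneg (inv_nonneg.2 hn0.le) hA0)
    have hb : ∀ u : ℝ, |fnStarHat c ε fε ρ n u ω - fnStar c ε fε n u ω| ≤ R := by
      intro u
      have hdiff : fnStarHat c ε fε ρ n u ω - fnStar c ε fε n u ω
          = (n:ℝ)⁻¹ * ∑ i ∈ Finset.Icc 1 n,
              (fε (u - XlagHat c ε ρ i ω) - fε (u - Xlag c ε (i:ℤ) ω)) := by
        rw [fnStarHat, fnStar, ← mul_sub, ← Finset.sum_sub_distrib]
      rw [hdiff, abs_mul, abs_of_nonneg (inv_nonneg.2 hn0.le)]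
      calc (n:ℝ)⁻¹ * |∑ i ∈ Finset.Icc 1 n,
              (fε (u - XlagHat c ε ρ i ω) - fε (u - Xlag c ε (i:ℤ) ω))|
          ≤ (n:ℝ)⁻¹ * ∑ i ∈ Finset.Icc 1 n,
              |fε (u - XlagHat c ε ρ i ω) - fε (u - Xlag c ε (i:ℤ) ω)| :=
            mul_le_mul_of_nonneg_left (Finset.abs_sum_le_sum_abs _ _)
              (inv_nonneg.2 hn0.le)
        _ ≤ (n:ℝ)⁻¹ * ∑ i ∈ Finset.Icc 1 n,
              M * |Xlag c ε (i:ℤ) ω - XlagHat c ε ρ i ω| := by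
            refine mul_le_mul_of_nonneg_left (Finset.sum_le_sum fun i hi => ?_)
              (inv_nonneg.2 hn0.le)
            have h := hMlip (u - XlagHat c ε ρ i ω) (u - Xlag c ε (i:ℤ) ω)
            have heq : (u - XlagHat c ε ρ i ω) - (u - Xlag c ε (i:ℤ) ω)
                = Xlag c ε (i:ℤ) ω - XlagHat c ε ρ i ω := by ring
            rwa [heq] at h
        _ = R := by rw [hR, hA, ← Finset.mul_sum]; ring
    have hsup_le : (⨆ u ∈ Set.Icc x y,
        |fnStarHat c ε fε ρ n u ω - fnStar c ε fε n u ω|) ≤ R :=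
      Real.iSup_le (fun u => Real.iSup_le (fun _ => hb u) hR0) hR0
    have hsup0 : 0 ≤ ⨆ u ∈ Set.Icc x y,
        |fnStarHat c ε fε ρ n u ω - fnStar c ε fε n u ω| :=
      Real.iSup_nonneg fun u => Real.iSup_nonneg fun _ => abs_nonneg _
    have hCS : A ^ 2 ≤ (n:ℝ) * ∑ i ∈ Finset.Icc 1 n,
        (Xlag c ε (i:ℤ) ω - XlagHat c ε ρ i ω) ^ 2 := by
      have h := Finset.sum_mul_sq_le_sq_mul_sq (Finset.Icc 1 n) (fun _ => (1:ℝ))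
        (fun i => |Xlag c ε (i:ℤ) ω - XlagHat c ε ρ i ω|)
      simpa [hA, one_mul, one_pow, Finset.sum_const, Nat.card_Icc, sq_abs,
        nsmul_eq_mul, mul_one] using h
    calc (⨆ u ∈ Set.Icc x y,
          |fnStarHat c ε fε ρ n u ω - fnStar c ε fε n u ω|) ^ 2
        ≤ R ^ 2 := pow_le_pow_left₀ hsup0 hsup_le 2
      _ = M ^ 2 * ((n:ℝ)⁻¹) ^ 2 * A ^ 2 := by rw [hR]; ring
      _ ≤ M ^ 2 * ((n:ℝ)⁻¹) ^ 2 * ((n:ℝ) * ∑ i ∈ Finset.Icc 1 n,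
            (Xlag c ε (i:ℤ) ω - XlagHat c ε ρ i ω) ^ 2) :=
          mul_le_mul_of_nonneg_left hCS (by positivity)
      _ = g ω := by
          rw [hg]
          field_simp
  have hmain := integral_mono_of_nonneg (ae_of_all _ fun ω => sq_nonneg _) hgint
    (ae_of_all _ hfg)
  refine hmain.trans ?_
  have hgeq : (∫ ω, g ω ∂(ℙ : Measure Ω)) = M ^ 2 / n * ∑ i ∈ Finset.Icc 1 n,
      ∫ ω, (Xlag c ε (i:ℤ) ω - XlagHat c ε ρ i ω) ^ 2 ∂(ℙ : Measure Ω) := by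
    rw [hg]
    rw [MeasureTheory.integral_const_mul]
    congr 1
    exact integral_finset_sum _ fun i hi => (hDq i hi).1
  rw [hgeq]
  have hsum_le : (∑ i ∈ Finset.Icc 1 n,
      ∫ ω, (Xlag c ε (i:ℤ) ω - XlagHat c ε ρ i ω) ^ 2 ∂(ℙ : Measure Ω)) ≤ 2 * Vr * S := by
    calc (∑ i ∈ Finset.Icc 1 n,
        ∫ ω, (Xlag c ε (i:ℤ) ω - XlagHat c ε ρ i ω) ^ 2 ∂(ℙ : Measure Ω))
        ≤ ∑ i ∈ Finset.Icc 1 n, 2 * Vr * (Ttail c ρ i) ^ 2 :=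
          Finset.sum_le_sum fun i hi => (hDq i hi).2
      _ = 2 * Vr * ∑ i ∈ Finset.Icc 1 n, (Ttail c ρ i) ^ 2 := by rw [Finset.mul_sum]
      _ ≤ 2 * Vr * S := mul_le_mul_of_nonneg_left (hSb n) (by positivity)
  calc M ^ 2 / n * ∑ i ∈ Finset.Icc 1 n,
      ∫ ω, (Xlag c ε (i:ℤ) ω - XlagHat c ε ρ i ω) ^ 2 ∂(ℙ : Measure Ω)
      ≤ M ^ 2 / n * (2 * Vr * S) :=
        mul_le_mul_of_nonneg_left hsum_le (by positivity)
    _ = M ^ 2 * (2 * Vr * S) / n := by ring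

end BKpaper
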